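/- arXiv:1408.6180 — 2 statements merged into one kernel-verified Lean document; each statement's English description precedes it below -/
import Mathlib

section
/- For every integer k ≥ 0 and every α > 0, the quantity D_k(α) := J_k(α)(J_k'(α) + α J_k''(α)) − α (J_k'(α))² is strictly negative. In particular D_k has no positive root. -/
open Real Set

/-- Bessel function of the first kind of integer order `k`, defined by its power series. -/
noncomputable def besselJ (k : ℕ) (x : ℝ) : ℝ :=
  ∑' m : ℕ, ((-1 : ℝ) ^ m / ((Nat.factorial m : ℝ) * (Nat.factorial (m + k) : ℝ))) *
    (x / 2) ^ (2 * m + k)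

namespace DkAux

noncomputable def c (k m : ℕ) : ℝ :=
  (-1 : ℝ) ^ m / ((Nat.factorial m : ℝ) * (Nat.factorial (m + k) : ℝ))

noncomputable def f (k m : ℕ) (x : ℝ) : ℝ := c k m * (x / 2) ^ (2 * m + k)

noncomputable def f1 (k m : ℕ) (x : ℝ) : ℝ :=
  c k m * (((2 * m + k : ℕ) : ℝ) * (x / 2) ^ (2 * m + k - 1) * (1 / 2))

noncomputable def f2 (k m : ℕ) (x : ℝ) : ℝ :=
  (c k m * ((2 * m + k : ℕ) : ℝ) * (1 / 2)) *
    (((2 * m + k - 1 : ℕ) : ℝ) * (x / 2) ^ (2 * m + k - 1 - 1) * (1 / 2))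

lemma besselJ_eq (k : ℕ) : besselJ k = fun x => ∑' m, f k m x := rfl

noncomputable def u (M : ℝ) (k m : ℕ) : ℝ := (4 * M) ^ (2 * m + k) / (Nat.factorial m : ℝ)

lemma summable_u (M : ℝ) (k : ℕ) : Summable (u M k) := by
  have h := (Real.summable_pow_div_factorial ((4 * M) ^ 2)).mul_left ((4 * M) ^ k)
  apply h.congr
  intro m
  rw [u, pow_add, pow_mul]
  ring

lemma abs_c_le (k m : ℕ) : |c k m| ≤ 1 / (Nat.factorial m : ℝ) := by
  rw [c, abs_div, abs_pow, abs_neg, abs_one, one_pow, abs_mul, Nat.abs_cast, Nat.abs_cast]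
  rw [div_le_div_iff₀ (by positivity) (by positivity)]
  have h1 : (1 : ℝ) ≤ (Nat.factorial (m + k) : ℝ) := by
    exact_mod_cast Nat.one_le_iff_ne_zero.mpr (Nat.factorial_ne_zero _)
  have h2 : (0:ℝ) < (Nat.factorial m : ℝ) := by positivity
  nlinarith

lemma hasDerivAt_f (k m : ℕ) (x : ℝ) : HasDerivAt (f k m) (f1 k m x) x := by
  have h : HasDerivAt (fun x : ℝ => x / 2) (1 / 2) x := (hasDerivAt_id x).div_const 2
  have h2 := (h.fun_pow (2 * m + k)).const_mul (c k m)
  exact h2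

lemma hasDerivAt_f1 (k m : ℕ) (x : ℝ) : HasDerivAt (f1 k m) (f2 k m x) x := by
  have h : HasDerivAt (fun x : ℝ => x / 2) (1 / 2) x := (hasDerivAt_id x).div_const 2
  have h2 := (h.fun_pow (2 * m + k - 1)).const_mul (c k m * ((2 * m + k : ℕ) : ℝ) * (1 / 2))
  have hrw : f1 k m = fun x : ℝ =>
      (c k m * ((2 * m + k : ℕ) : ℝ) * (1 / 2)) * (x / 2) ^ (2 * m + k - 1) := by
    funext y; simp only [f1]; ring
  rw [hrw]
  simp only [f2]
  convert h2 using 1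
  try ring

lemma aux_pow (j n : ℕ) (hj : j ≤ n) {M x : ℝ} (hM : 1 ≤ M) (hx : |x| ≤ M) :
    |x / 2| ^ j ≤ M ^ n := by
  have h1 : |x / 2| ≤ M := by
    rw [abs_div, abs_two]; linarith [abs_nonneg x]
  calc |x / 2| ^ j ≤ M ^ j := pow_le_pow_left₀ (abs_nonneg _) h1 j
    _ ≤ M ^ n := pow_le_pow_right₀ hM hj

lemma cast_le_two_pow (j n : ℕ) (hj : j ≤ n) : ((j : ℕ) : ℝ) ≤ 2 ^ n := by
  have := (Nat.lt_two_pow_self (n := n))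
  have h2 : j < 2 ^ n := lt_of_le_of_lt hj this
  exact_mod_cast h2.le

lemma bound_f (k m : ℕ) {M x : ℝ} (hM : 1 ≤ M) (hx : |x| ≤ M) : |f k m x| ≤ u M k m := by
  have h0 : (0 : ℝ) < (Nat.factorial m : ℝ) := by positivity
  have hp : |x / 2| ^ (2 * m + k) ≤ (4 * M) ^ (2 * m + k) :=
    (aux_pow _ _ le_rfl hM hx).trans (pow_le_pow_left₀ (by linarith) (by linarith) _)
  calc |f k m x| = |c k m| * |x / 2| ^ (2 * m + k) := by
        rw [f, abs_mul, abs_pow]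
    _ ≤ (1 / (Nat.factorial m : ℝ)) * (4 * M) ^ (2 * m + k) :=
        mul_le_mul (abs_c_le k m) hp (by positivity) (by positivity)
    _ = u M k m := by rw [u]; ring

lemma bound_f1 (k m : ℕ) {M x : ℝ} (hM : 1 ≤ M) (hx : |x| ≤ M) : |f1 k m x| ≤ u M k m := by
  have h0 : (0 : ℝ) < (Nat.factorial m : ℝ) := by positivity
  have hc := abs_c_le k m
  have hn : ((2 * m + k : ℕ) : ℝ) ≤ 2 ^ (2 * m + k) := cast_le_two_pow _ _ le_rfl
  have hp : |x / 2| ^ (2 * m + k - 1) ≤ M ^ (2 * m + k) :=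
    aux_pow _ _ (Nat.sub_le _ _) hM hx
  calc |f1 k m x| = |c k m| * (((2 * m + k : ℕ) : ℝ) * |x / 2| ^ (2 * m + k - 1) * (1 / 2)) := by
        rw [f1, abs_mul, abs_mul, abs_mul, abs_pow, Nat.abs_cast,
          show |(1:ℝ)/2| = 1/2 from by norm_num]
    _ ≤ (1 / (Nat.factorial m : ℝ)) * ((2 : ℝ) ^ (2 * m + k) * M ^ (2 * m + k) * 1) := by
        gcongr
        all_goals first | norm_num | positivity | nlinarith [hM]
    _ = (2 * M) ^ (2 * m + k) / (Nat.factorial m : ℝ) := by rw [mul_one, ← mul_pow]; ring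
    _ ≤ u M k m := by
        rw [u]
        exact (div_le_div_iff_of_pos_right h0).mpr (pow_le_pow_left₀ (by linarith) (by linarith) _)

lemma bound_f2 (k m : ℕ) {M x : ℝ} (hM : 1 ≤ M) (hx : |x| ≤ M) : |f2 k m x| ≤ u M k m := by
  have h0 : (0 : ℝ) < (Nat.factorial m : ℝ) := by positivity
  have hc := abs_c_le k m
  have hn : ((2 * m + k : ℕ) : ℝ) ≤ 2 ^ (2 * m + k) := cast_le_two_pow _ _ le_rfl
  have hn1 : ((2 * m + k - 1 : ℕ) : ℝ) ≤ 2 ^ (2 * m + k) := cast_le_two_pow _ _ (Nat.sub_le _ _)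
  have hp : |x / 2| ^ (2 * m + k - 1 - 1) ≤ M ^ (2 * m + k) :=
    aux_pow _ _ ((Nat.sub_le _ _).trans (Nat.sub_le _ _)) hM hx
  calc |f2 k m x| = (|c k m| * ((2 * m + k : ℕ) : ℝ) * (1 / 2)) *
        (((2 * m + k - 1 : ℕ) : ℝ) * |x / 2| ^ (2 * m + k - 1 - 1) * (1 / 2)) := by
        rw [f2, abs_mul, abs_mul, abs_mul, abs_mul, abs_mul, abs_pow, Nat.abs_cast, Nat.abs_cast,
          show |(1:ℝ)/2| = 1/2 from by norm_num]
    _ ≤ ((1 / (Nat.factorial m : ℝ)) * (2 : ℝ) ^ (2 * m + k) * 1) *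
        ((2 : ℝ) ^ (2 * m + k) * M ^ (2 * m + k) * 1) := by
        gcongr
        all_goals first | norm_num | positivity | nlinarith [hM]
    _ = u M k m := by
        rw [u, mul_one, mul_one, one_div, inv_mul_eq_div]
        rw [show (4 : ℝ) * M = 2 * (2 * M) by ring]
        rw [mul_pow, mul_pow]
        ring

noncomputable def J1 (k : ℕ) (x : ℝ) : ℝ := ∑' m, f1 k m x
noncomputable def J2 (k : ℕ) (x : ℝ) : ℝ := ∑' m, f2 k m x

lemma oneleM (x : ℝ) : (1:ℝ) ≤ |x| + 1 := by linarith [abs_nonneg x]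

lemma summable_f (k : ℕ) (x : ℝ) : Summable (fun m => f k m x) :=
  Summable.of_norm_bounded (summable_u (|x|+1) k)
    (fun m => by rw [Real.norm_eq_abs]; exact bound_f k m (oneleM x) (by linarith))

lemma summable_f1 (k : ℕ) (x : ℝ) : Summable (fun m => f1 k m x) :=
  Summable.of_norm_bounded (summable_u (|x|+1) k)
    (fun m => by rw [Real.norm_eq_abs]; exact bound_f1 k m (oneleM x) (by linarith))

lemma summable_f2 (k : ℕ) (x : ℝ) : Summable (fun m => f2 k m x) :=
  Summable.of_norm_bounded (summable_u (|x|+1) k)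
    (fun m => by rw [Real.norm_eq_abs]; exact bound_f2 k m (oneleM x) (by linarith))

lemma hasDerivAt_besselJ (k : ℕ) (x : ℝ) : HasDerivAt (besselJ k) (J1 k x) x := by
  rw [besselJ_eq]
  refine hasDerivAt_tsum_of_isPreconnected (u := u (|x|+1) k) (summable_u _ _)
    Metric.isOpen_ball (convex_ball (0:ℝ) (|x|+1)).isPreconnected
    (fun m y _ => hasDerivAt_f k m y)
    (fun m y hy => ?_) (Metric.mem_ball_self (by linarith [abs_nonneg x])) ?_
    (by simp [Metric.mem_ball, Real.dist_eq]; try linarith [le_abs_self x, neg_abs_le x])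
  · rw [Real.norm_eq_abs]
    have hy' : |y| ≤ |x| + 1 := by
      have := hy
      simp only [Metric.mem_ball, Real.dist_eq, sub_zero] at this
      linarith
    exact bound_f1 k m (oneleM x) hy'
  · apply summable_of_ne_finset_zero (s := ({0} : Finset ℕ))
    intro m hm
    simp only [Finset.mem_singleton] at hm
    simp [f, zero_pow (by omega : 2*m+k ≠ 0)]

lemma hasDerivAt_J1 (k : ℕ) (x : ℝ) : HasDerivAt (J1 k) (J2 k x) x := by
  refine hasDerivAt_tsum_of_isPreconnected (u := u (|x|+1) k) (summable_u _ _)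
    Metric.isOpen_ball (convex_ball (0:ℝ) (|x|+1)).isPreconnected
    (fun m y _ => hasDerivAt_f1 k m y)
    (fun m y hy => ?_) (Metric.mem_ball_self (by linarith [abs_nonneg x])) ?_
    (by simp [Metric.mem_ball, Real.dist_eq]; try linarith [le_abs_self x, neg_abs_le x])
  · rw [Real.norm_eq_abs]
    have hy' : |y| ≤ |x| + 1 := by
      have := hy
      simp only [Metric.mem_ball, Real.dist_eq, sub_zero] at this
      linarith
    exact bound_f2 k m (oneleM x) hy'
  · apply summable_of_ne_finset_zero (s := ({0} : Finset ℕ))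
    intro m hm
    simp only [Finset.mem_singleton] at hm
    simp [f1, zero_pow (by omega : 2*m+k-1 ≠ 0)]

lemma deriv_besselJ (k : ℕ) : deriv (besselJ k) = J1 k :=
  funext fun x => (hasDerivAt_besselJ k x).deriv

lemma deriv_J1 (k : ℕ) : deriv (J1 k) = J2 k :=
  funext fun x => (hasDerivAt_J1 k x).deriv

noncomputable def Aterm (k : ℕ) (x : ℝ) (m : ℕ) : ℝ :=
  4 * (m:ℝ) * ((m:ℝ) + (k:ℝ)) * c k m * (x/2) ^ (2*m+k)

lemma key (k m : ℕ) (x : ℝ) :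
    x^2 * f2 k m x + x * f1 k m x + (x^2 - (k:ℝ)^2) * f k m x
      = Aterm k x m + x^2 * f k m x := by
  rcases m with _ | m
  · rcases k with _ | _ | k
    · simp only [f, f1, f2, c, Aterm]; norm_num
    · simp only [f, f1, f2, c, Aterm]; norm_num; ring
    · simp only [f, f1, f2, c, Aterm]
      simp only [show 2*0+(k+2) = (2*0+k)+2 from by omega,
        show (2*0+k)+2-1 = (2*0+k)+1 from by omega,
        show (2*0+k)+1-1 = 2*0+k from by omega]
      push_cast
      ring
  · simp only [f, f1, f2, c, Aterm]
    simp only [show 2*(m+1)+k = (2*m+k)+2 from by omega,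
      show (2*m+k)+2-1 = (2*m+k)+1 from by omega,
      show (2*m+k)+1-1 = 2*m+k from by omega]
    push_cast
    ring

lemma Arec (k m : ℕ) (x : ℝ) : Aterm k x (m+1) = -(x^2 * f k m x) := by
  simp only [Aterm, f, c]
  rw [show 2*(m+1)+k = (2*m+k)+2 from by omega, pow_add,
    Nat.factorial_succ, show m+1+k = (m+k)+1 from by omega, Nat.factorial_succ, pow_succ]
  have h1 : ((Nat.factorial m : ℝ)) ≠ 0 := by positivity
  have h2 : ((Nat.factorial (m+k) : ℝ)) ≠ 0 := by positivity
  have h3 : ((m:ℝ) + 1) ≠ 0 := by positivity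
  have h4 : ((m:ℝ) + (k:ℝ) + 1) ≠ 0 := by positivity
  push_cast
  field_simp
  ring

lemma ode (k : ℕ) (x : ℝ) :
    x^2 * J2 k x + x * J1 k x + (x^2 - (k:ℝ)^2) * besselJ k x = 0 := by
  have hfs := summable_f k x
  have hf1s := summable_f1 k x
  have hf2s := summable_f2 k x
  have hTs : Summable (fun m => x^2 * f2 k m x + x * f1 k m x + (x^2 - (k:ℝ)^2) * f k m x) :=
    ((hf2s.mul_left _).add (hf1s.mul_left _)).add (hfs.mul_left _)
  have hA : Summable (Aterm k x) := by
    apply (hTs.sub (hfs.mul_left (x^2))).congr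
    intro m
    linear_combination key k m x
  calc x^2 * J2 k x + x * J1 k x + (x^2 - (k:ℝ)^2) * besselJ k x
      = ∑' m, (x^2 * f2 k m x + x * f1 k m x + (x^2 - (k:ℝ)^2) * f k m x) := by
        rw [J2, J1, besselJ_eq, ← tsum_mul_left, ← tsum_mul_left, ← tsum_mul_left,
          ← Summable.tsum_add (hf2s.mul_left _) (hf1s.mul_left _),
          ← Summable.tsum_add ((hf2s.mul_left _).add (hf1s.mul_left _)) (hfs.mul_left _)]
    _ = ∑' m, (Aterm k x m + x^2 * f k m x) := tsum_congr (fun m => key k m x)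
    _ = (∑' m, Aterm k x m) + x^2 * besselJ k x := by
        rw [Summable.tsum_add hA (hfs.mul_left _), tsum_mul_left, besselJ_eq]
    _ = 0 := by
        rw [Summable.tsum_eq_zero_add hA]
        have h0 : Aterm k x 0 = 0 := by simp [Aterm]
        rw [h0, zero_add]
        rw [tsum_congr (fun m => Arec k m x), tsum_neg, tsum_mul_left, besselJ_eq]
        ring

lemma besselJ_pos (k : ℕ) {x : ℝ} (hx : 0 < x) (hx1 : x ≤ 1) : 0 < besselJ k x := by
  have hfs := summable_f k x
  have hs0 : (0:ℝ) < x / 2 := by linarith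
  have hs1 : x / 2 ≤ 1 / 2 := by linarith
  have hkfac : (0:ℝ) < (Nat.factorial k : ℝ) := by positivity
  have hg : Summable (fun m : ℕ => ((x/2)^k / (Nat.factorial k : ℝ)) * (1/4) * (1/4:ℝ)^m) :=
    (summable_geometric_of_lt_one (by norm_num) (by norm_num)).mul_left _
  have hsq : (x/2)^2 ≤ (1:ℝ)/4 := by nlinarith
  have hbound : ∀ m : ℕ, |f k (m+1) x| ≤ ((x/2)^k / (Nat.factorial k : ℝ)) * (1/4) * (1/4:ℝ)^m := by
    intro m
    have hc' : |c k (m+1)| ≤ 1 / (Nat.factorial k : ℝ) := by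
      rw [c, abs_div, abs_pow, abs_neg, abs_one, one_pow, abs_mul, Nat.abs_cast, Nat.abs_cast]
      rw [div_le_div_iff₀ (by positivity) (by positivity)]
      have hk1 : (Nat.factorial k : ℝ) ≤ (Nat.factorial (m+1+k) : ℝ) := by
        exact_mod_cast Nat.factorial_le (by omega)
      have hm1 : (1:ℝ) ≤ (Nat.factorial (m+1) : ℝ) := by
        exact_mod_cast Nat.one_le_iff_ne_zero.mpr (Nat.factorial_ne_zero _)
      nlinarith
    calc |f k (m+1) x|
        = |c k (m+1)| * ((x/2)^k * ((x/2)^2)^m * (x/2)^2) := by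
          rw [f, abs_mul, abs_pow, abs_of_nonneg hs0.le,
            show 2*(m+1)+k = k + 2*m + 2 from by omega, pow_add, pow_add, pow_mul]
      _ ≤ (1 / (Nat.factorial k : ℝ)) * ((x/2)^k * (1/4:ℝ)^m * (1/4)) := by
          gcongr
          all_goals first | positivity | exact hsq | exact hc'
      _ = ((x/2)^k / (Nat.factorial k : ℝ)) * (1/4) * (1/4:ℝ)^m := by ring
  have hsum1 : Summable fun m => |f k (m+1) x| :=
    Summable.of_nonneg_of_le (fun _ => abs_nonneg _) hbound hg
  have h2 : |∑' m, f k (m+1) x| ≤ ∑' m, |f k (m+1) x| := by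
    have := norm_tsum_le_tsum_norm (f := fun m => f k (m+1) x)
      (by simpa [Real.norm_eq_abs] using hsum1)
    simpa [Real.norm_eq_abs] using this
  have h3 : ∑' m, |f k (m+1) x| ≤ ∑' m, ((x/2)^k / (Nat.factorial k : ℝ)) * (1/4) * (1/4:ℝ)^m :=
    Summable.tsum_le_tsum hbound hsum1 hg
  have h4 : ∑' m : ℕ, ((x/2)^k / (Nat.factorial k : ℝ)) * (1/4) * (1/4:ℝ)^m
      = (x/2)^k / (Nat.factorial k : ℝ) * (1/3) := by
    rw [tsum_mul_left, tsum_geometric_of_lt_one (by norm_num) (by norm_num)]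
    norm_num
    ring
  have h5 : |∑' m, f k (m+1) x| ≤ (x/2)^k / (Nat.factorial k : ℝ) * (1/3) :=
    h2.trans (h3.trans_eq h4)
  have h6 : besselJ k x = f k 0 x + ∑' m, f k (m+1) x := by
    rw [besselJ_eq]; exact Summable.tsum_eq_zero_add hfs
  have h7 : f k 0 x = (x/2)^k / (Nat.factorial k : ℝ) := by
    simp [f, c]
    ring
  have hp : 0 < (x/2)^k / (Nat.factorial k : ℝ) := by positivity
  have := abs_le.mp h5
  rw [h6, h7]
  linarith [this.1]

noncomputable def Hf (k : ℕ) (t : ℝ) : ℝ :=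
  (t^2 - (k:ℝ)^2) * (besselJ k t)^2 + t^2 * (J1 k t)^2

lemma hasDerivAt_H (k : ℕ) (t : ℝ) : HasDerivAt (Hf k) (2 * t * (besselJ k t)^2) t := by
  have h1 := hasDerivAt_besselJ k t
  have h2 := hasDerivAt_J1 k t
  have hpoly : HasDerivAt (fun t : ℝ => t^2 - (k:ℝ)^2) (2*t) t := by
    simpa using (hasDerivAt_pow 2 t).sub_const ((k:ℝ)^2)
  have hid : HasDerivAt (fun t : ℝ => t^2) (2*t) t := by simpa using hasDerivAt_pow 2 t
  have h := (hpoly.mul (h1.fun_pow 2)).add (hid.mul (h2.fun_pow 2))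
  have hode := ode k t
  unfold Hf
  refine HasDerivAt.congr_deriv h (Eq.symm ?_)
  push_cast
  linear_combination (-2 * J1 k t) * hode

lemma continuous_besselJ (k : ℕ) : Continuous (besselJ k) :=
  continuous_iff_continuousAt.mpr fun x => (hasDerivAt_besselJ k x).continuousAt

end DkAux


/-- `D_k(α) = J_k(α)(J_k'(α) + α J_k''(α)) − α J_k'(α)²` is strictly negative for all `α > 0`;
in particular it has no positive root. -/
theorem Dk_neg (k : ℕ) (α : ℝ) (hα : 0 < α) :
    besselJ k α * (deriv (besselJ k) α + α * deriv (deriv (besselJ k)) α)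
      - α * (deriv (besselJ k) α) ^ 2 < 0 := by
  have hd1 : deriv (besselJ k) = DkAux.J1 k := DkAux.deriv_besselJ k
  have hd2 : deriv (deriv (besselJ k)) α = DkAux.J2 k α := by rw [hd1, DkAux.deriv_J1]
  rw [hd1, DkAux.deriv_J1]
  have hcont : Continuous fun t => 2 * t * (besselJ k t)^2 :=
    (continuous_const.mul continuous_id).mul ((DkAux.continuous_besselJ k).pow 2)
  have hint : ∀ a b : ℝ, IntervalIntegrable (fun t => 2*t*(besselJ k t)^2)
      MeasureTheory.volume a b := fun a b => hcont.intervalIntegrable a b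
  have hftc : ∀ b : ℝ, (∫ t in (0:ℝ)..b, 2*t*(besselJ k t)^2) = DkAux.Hf k b - DkAux.Hf k 0 :=
    fun b => intervalIntegral.integral_eq_sub_of_hasDerivAt
      (fun t _ => DkAux.hasDerivAt_H k t) (hint 0 b)
  have hH0 : DkAux.Hf k 0 = 0 := by
    rcases Nat.eq_zero_or_pos k with hk | hk
    · simp [DkAux.Hf, hk]
    · have hz : besselJ k 0 = 0 := by
        rw [DkAux.besselJ_eq]
        have hzz : ∀ m : ℕ, DkAux.f k m 0 = 0 := fun m => by
          simp [DkAux.f, zero_pow (by omega : 2*m+k ≠ 0)]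
        simp [hzz]
      simp [DkAux.Hf, hz]
  set δ := min 1 α with hδ
  have hδ0 : 0 < δ := lt_min one_pos hα
  have hδα : δ ≤ α := min_le_right _ _
  have hpos1 : 0 < ∫ t in (0:ℝ)..δ, 2*t*(besselJ k t)^2 := by
    apply intervalIntegral.intervalIntegral_pos_of_pos_on (hint 0 δ) ?_ hδ0
    intro t ht
    have h1 : 0 < t := ht.1
    have h2 : t ≤ 1 := le_of_lt (lt_of_lt_of_le ht.2 (min_le_left _ _))
    have := DkAux.besselJ_pos k h1 h2
    positivity
  have hpos2 : 0 ≤ ∫ t in δ..α, 2*t*(besselJ k t)^2 := by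
    apply intervalIntegral.integral_nonneg hδα
    intro t ht
    have h1 : (0:ℝ) ≤ t := le_trans hδ0.le ht.1
    have h2 := sq_nonneg (besselJ k t)
    positivity
  have hsplit := intervalIntegral.integral_add_adjacent_intervals (hint 0 δ) (hint δ α)
  have hHα : 0 < DkAux.Hf k α := by
    have e1 := hftc α
    have e2 := hftc δ
    rw [hH0] at e1 e2
    linarith
  have hode := DkAux.ode k α
  have hHval : DkAux.Hf k α = (α^2 - (k:ℝ)^2) * (besselJ k α)^2 + α^2 * (DkAux.J1 k α)^2 := rfl
  have hkey : α * (besselJ k α * (DkAux.J1 k α + α * DkAux.J2 k α) - α * (DkAux.J1 k α)^2)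
      = -(DkAux.Hf k α) := by
    rw [hHval]; linear_combination (besselJ k α) * hode
  nlinarith [hHα, hα, hkey]
end

section
/- For any integer k ≥ 0, κ > 0, and α > 0, the determinant function satisfies F_k(α) = α J_k(κ/α) J_{k+1}(α) − (κ/α) J_k(α) J_{k+1}(κ/α), and also F_{k+1}(α) = (κ/α) J_k(κ/α) J_{k+1}(α) − α J_k(α) J_{k+1}(κ/α). Consequently, if F_k(α) = 0 then F_{k+1}(α) = ((κ² − α⁴)/(κα)) J_{k+1}(α) J_k(κ/α). -/
open Real Set

/-- The coefficient of the Bessel series. -/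
noncomputable def besselC (k m : ℕ) : ℝ :=
  (-1 : ℝ) ^ m / ((Nat.factorial m : ℝ) * (Nat.factorial (m + k) : ℝ))

lemma besselJ_eq (k : ℕ) (x : ℝ) :
    besselJ k x = ∑' m : ℕ, besselC k m * (x / 2) ^ (2 * m + k) := rfl

lemma abs_besselC_le (k m : ℕ) : |besselC k m| ≤ 1 / (Nat.factorial m : ℝ) := by
  have h1 : (1 : ℝ) ≤ (Nat.factorial (m + k) : ℝ) := by
    exact_mod_cast Nat.one_le_iff_ne_zero.mpr (Nat.factorial_ne_zero _)
  have h0 : (0 : ℝ) < (Nat.factorial m : ℝ) := by positivity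
  rw [besselC, abs_div, abs_pow, abs_neg, abs_one, one_pow, abs_mul,
    abs_of_nonneg h0.le, abs_of_nonneg (by positivity : (0:ℝ) ≤ (Nat.factorial (m+k) : ℝ))]
  rw [div_le_div_iff₀ (by positivity) h0]
  nlinarith [h0]

lemma summable_R (k : ℕ) (r : ℝ) :
    Summable (fun m : ℕ => r ^ (2 * m + k) / (Nat.factorial m : ℝ)) := by
  have h := (Real.summable_pow_div_factorial (r ^ 2)).mul_left (r ^ k)
  refine h.congr fun m => ?_
  rw [pow_add, pow_mul]
  ring

lemma summable_besselJ (k : ℕ) (x : ℝ) :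
    Summable (fun m : ℕ => besselC k m * (x / 2) ^ (2 * m + k)) := by
  apply Summable.of_norm_bounded (summable_R k (|x| / 2))
  intro m
  rw [norm_mul, norm_pow, Real.norm_eq_abs, Real.norm_eq_abs, abs_div, abs_two]
  calc |besselC k m| * (|x| / 2) ^ (2 * m + k)
      ≤ (1 / (Nat.factorial m : ℝ)) * (|x| / 2) ^ (2 * m + k) := by
        gcongr; exact abs_besselC_le k m
    _ = (|x| / 2) ^ (2 * m + k) / (Nat.factorial m : ℝ) := by ring

/-- Termwise derivative of the Bessel series. -/
noncomputable def besselD (k : ℕ) (x : ℝ) (m : ℕ) : ℝ :=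
  besselC k m * ((2 * m + k : ℕ) * (x / 2) ^ (2 * m + k - 1) / 2)

lemma hasDerivAt_term (k m : ℕ) (x : ℝ) :
    HasDerivAt (fun y => besselC k m * (y / 2) ^ (2 * m + k)) (besselD k x m) x := by
  have h : HasDerivAt (fun y : ℝ => (y / 2) ^ (2 * m + k))
      (((2 * m + k : ℕ) : ℝ) * (x / 2) ^ (2 * m + k - 1) * (1 / 2)) x := by
    have h1 : HasDerivAt (fun y : ℝ => y / 2) (1 / 2) x := by
      simpa using (hasDerivAt_id x).div_const 2
    simpa using h1.fun_pow (2 * m + k)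
  have := h.const_mul (besselC k m)
  refine this.congr_deriv ?_
  rw [besselD]; ring

lemma besselD_bound (k m : ℕ) {x R : ℝ} (hR : 2 ≤ R) (hx : |x| ≤ R) :
    ‖besselD k x m‖ ≤ R ^ (2 * m + k) / (Nat.factorial m : ℝ) := by
  set n := 2 * m + k with hn
  have hR0 : (0 : ℝ) < R := by linarith
  have habs : ‖besselD k x m‖
      = |besselC k m| * ((n : ℝ) * (|x| / 2) ^ (n - 1) / 2) := by
    rw [besselD, norm_mul, Real.norm_eq_abs, Real.norm_eq_abs, abs_div, abs_mul,
      abs_pow, abs_div, abs_two, Nat.abs_cast]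
  have h1 : |besselC k m| ≤ 1 / (Nat.factorial m : ℝ) := abs_besselC_le k m
  have h2 : (|x| / 2) ^ (n - 1) ≤ (R / 2) ^ (n - 1) := by
    apply pow_le_pow_left₀ (by positivity)
    linarith
  have h3 : (R / 2) ^ (n - 1) ≤ (R / 2) ^ n :=
    pow_le_pow_right₀ (by linarith) (Nat.sub_le n 1)
  have h4 : (n : ℝ) ≤ 2 ^ n := by
    exact_mod_cast (Nat.lt_two_pow_self (n := n)).le
  have hfac : (0 : ℝ) < (Nat.factorial m : ℝ) := by positivity
  have h5 : (n : ℝ) * (|x| / 2) ^ (n - 1) ≤ 2 ^ n * (R / 2) ^ n :=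
    mul_le_mul h4 (h2.trans h3) (by positivity) (by positivity)
  have h6 : (2:ℝ) ^ n * (R / 2) ^ n = R ^ n := by
    rw [← mul_pow]
    congr 1
    ring
  calc ‖besselD k x m‖ = |besselC k m| * ((n : ℝ) * (|x| / 2) ^ (n - 1) / 2) := habs
    _ ≤ (1 / (Nat.factorial m : ℝ)) * (2 ^ n * (R / 2) ^ n) := by
        apply mul_le_mul h1 _ (by positivity) (by positivity)
        nlinarith [h5, pow_nonneg (by positivity : (0:ℝ) ≤ R/2) n,
          pow_nonneg (by norm_num : (0:ℝ) ≤ (2:ℝ)) n]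
    _ = R ^ n / (Nat.factorial m : ℝ) := by rw [h6]; ring

lemma summable_besselD (k : ℕ) (x : ℝ) : Summable (besselD k x) := by
  apply Summable.of_norm_bounded (summable_R k (|x| + 2))
  intro m
  exact besselD_bound k m (by linarith [abs_nonneg x]) (by linarith)

lemma hasDerivAt_besselJ (k : ℕ) (x : ℝ) :
    HasDerivAt (besselJ k) (∑' m, besselD k x m) x := by
  have key : HasDerivAt (fun z => ∑' m : ℕ, besselC k m * (z / 2) ^ (2 * m + k))
      (∑' m, besselD k x m) x := by
    refine hasDerivAt_tsum_of_isPreconnected (summable_R k (|x| + 2))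
      (Metric.isOpen_ball (x := (0:ℝ)) (ε := |x| + 1))
      ((convex_ball (0:ℝ) (|x| + 1)).isPreconnected)
      (fun m y _ => hasDerivAt_term k m y)
      (fun m y hy => ?_) ?_ (summable_besselJ k 0) ?_
    · have hy' : |y| < |x| + 1 := by
        simpa [Real.dist_eq] using Metric.mem_ball.mp hy
      exact besselD_bound k m (by linarith [abs_nonneg x]) (by linarith)
    · simp only [Metric.mem_ball, dist_zero_right, Real.norm_eq_abs, abs_zero]
      positivity
    · simp only [Metric.mem_ball, dist_zero_right, Real.norm_eq_abs]
      linarith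
  exact key

lemma deriv_besselJ (k : ℕ) (x : ℝ) :
    deriv (besselJ k) x = ∑' m, besselD k x m :=
  (hasDerivAt_besselJ k x).deriv

lemma besselC_succ (k m : ℕ) :
    (2 * (m : ℝ) + 2) * besselC k (m + 1) = -2 * besselC (k + 1) m := by
  have h : m + 1 + k = m + (k + 1) := by omega
  rw [besselC, besselC, h, pow_succ, Nat.factorial_succ]
  have h1 : (0:ℝ) < (Nat.factorial m : ℝ) := by positivity
  have h2 : (0:ℝ) < (Nat.factorial (m + (k+1)) : ℝ) := by positivity
  field_simp
  push_cast
  ring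

lemma besselC_mul (k m : ℕ) :
    (2 * (m : ℝ) + 2 * k + 2) * besselC (k + 1) m = 2 * besselC k m := by
  have h : m + (k + 1) = (m + k) + 1 := by omega
  rw [besselC, besselC, h, Nat.factorial_succ]
  have h1 : (0:ℝ) < (Nat.factorial m : ℝ) := by positivity
  have h2 : (0:ℝ) < (Nat.factorial (m + k) : ℝ) := by positivity
  field_simp
  push_cast
  ring

lemma bessel_id1 (k : ℕ) (x : ℝ) :
    x * deriv (besselJ k) x = k * besselJ k x - x * besselJ (k + 1) x := by
  rw [deriv_besselJ, besselJ_eq, besselJ_eq]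
  have hD : Summable (besselD k x) := summable_besselD k x
  have hJ : Summable (fun m : ℕ => besselC k m * (x / 2) ^ (2 * m + k)) :=
    summable_besselJ k x
  have hJ1 : Summable (fun m : ℕ => besselC (k+1) m * (x / 2) ^ (2 * m + (k+1))) :=
    summable_besselJ (k+1) x
  rw [← tsum_mul_left, ← tsum_mul_left, ← tsum_mul_left]
  have hB : Summable (fun m => x * besselD k x m - (k : ℝ) * (besselC k m * (x / 2) ^ (2 * m + k))) :=
    (hD.mul_left x).sub (hJ.mul_left (k:ℝ))
  have key : (∑' m, x * besselD k x m) - (∑' m, (k:ℝ) * (besselC k m * (x / 2) ^ (2 * m + k)))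
      = - ∑' m, x * (besselC (k+1) m * (x / 2) ^ (2 * m + (k+1))) := by
    rw [← Summable.tsum_sub (hD.mul_left x) (hJ.mul_left (k:ℝ))]
    rw [Summable.tsum_eq_zero_add hB]
    have hzero : x * besselD k x 0 - (k : ℝ) * (besselC k 0 * (x / 2) ^ (2 * 0 + k)) = 0 := by
      rcases Nat.eq_zero_or_pos k with hk | hk
      · subst hk; simp [besselD]
      · obtain ⟨j, rfl⟩ : ∃ j, k = j + 1 := ⟨k - 1, by omega⟩
        have e1 : 2 * 0 + (j + 1) = j + 1 := by omega
        have e2 : 2 * 0 + (j + 1) - 1 = j := by omega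
        rw [besselD, e1, Nat.add_sub_cancel, pow_succ]
        push_cast
        ring
    rw [hzero, zero_add, ← tsum_neg]
    apply tsum_congr
    intro m
    have he1 : 2 * (m + 1) + k - 1 = 2 * m + k + 1 := by omega
    have he2 : 2 * (m + 1) + k = 2 * m + k + 2 := by omega
    have he3 : 2 * m + (k + 1) = 2 * m + k + 1 := by omega
    rw [besselD, he1, he2, he3]
    have hc := besselC_succ k m
    have hx2 : x * (x / 2) ^ (2 * m + k + 1) = 2 * (x / 2) ^ (2 * m + k + 2) := by
      rw [pow_succ]
      ring
    push_cast
    linear_combination ((x / 2) ^ (2 * m + k + 2)) * hc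
      + (besselC k (m + 1) * (2 * (m:ℝ) + 2 + (k:ℝ)) / 2 + besselC (k+1) m) * hx2
  linarith [key]

lemma bessel_id2 (k : ℕ) (x : ℝ) :
    x * deriv (besselJ (k + 1)) x
      = x * besselJ k x - ((k : ℝ) + 1) * besselJ (k + 1) x := by
  rw [deriv_besselJ, besselJ_eq, besselJ_eq]
  have hJ : Summable (fun m : ℕ => besselC k m * (x / 2) ^ (2 * m + k)) :=
    summable_besselJ k x
  have hJ1 : Summable (fun m : ℕ => besselC (k+1) m * (x / 2) ^ (2 * m + (k+1))) :=
    summable_besselJ (k+1) x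
  rw [← tsum_mul_left, ← tsum_mul_left, ← tsum_mul_left,
    ← Summable.tsum_sub (hJ.mul_left x) (hJ1.mul_left _)]
  apply tsum_congr
  intro m
  have he1 : 2 * m + (k + 1) - 1 = 2 * m + k := by omega
  have he2 : 2 * m + (k + 1) = 2 * m + k + 1 := by omega
  rw [besselD, he1, he2]
  have hc := besselC_mul k m
  have hx2 : x * (x / 2) ^ (2 * m + k) = 2 * (x / 2) ^ (2 * m + k + 1) := by
    rw [pow_succ]; ring
  push_cast
  linear_combination ((x / 2) ^ (2 * m + k + 1)) * hc
    + (besselC (k+1) m * (2 * (m:ℝ) + (k:ℝ) + 1) / 2 - besselC k m) * hx2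

/-- Product forms of the determinant `F_k` and `F_{k+1}`, and the consequence that if
`F_k(α) = 0` then `F_{k+1}(α) = ((κ² − α⁴)/(κα)) J_{k+1}(α) J_k(κ/α)`. -/
theorem Fk_product_forms (k : ℕ) (κ α : ℝ) (hκ : 0 < κ) (hα : 0 < α) :
    let F : ℕ → ℝ → ℝ := fun m a =>
      (κ / a) * besselJ m a * deriv (besselJ m) (κ / a)
        - a * besselJ m (κ / a) * deriv (besselJ m) a
    F k α = α * besselJ k (κ / α) * besselJ (k + 1) α
        - (κ / α) * besselJ k α * besselJ (k + 1) (κ / α) ∧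
    F (k + 1) α = (κ / α) * besselJ k (κ / α) * besselJ (k + 1) α
        - α * besselJ k α * besselJ (k + 1) (κ / α) ∧
    (F k α = 0 →
      F (k + 1) α = ((κ ^ 2 - α ^ 4) / (κ * α)) * besselJ (k + 1) α * besselJ k (κ / α)) := by
  intro F
  have hb : (0:ℝ) < κ / α := div_pos hκ hα
  have hane : α ≠ 0 := hα.ne'
  have hbne : κ / α ≠ 0 := hb.ne'
  have e1a := bessel_id1 k α
  have e1b := bessel_id1 k (κ / α)
  have e2a := bessel_id2 k α
  have e2b := bessel_id2 k (κ / α)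
  have h1 : F k α = α * besselJ k (κ / α) * besselJ (k + 1) α
      - (κ / α) * besselJ k α * besselJ (k + 1) (κ / α) := by
    show (κ / α) * besselJ k α * deriv (besselJ k) (κ / α)
        - α * besselJ k (κ / α) * deriv (besselJ k) α = _
    linear_combination besselJ k α * e1b - besselJ k (κ / α) * e1a
  have h2 : F (k + 1) α = (κ / α) * besselJ k (κ / α) * besselJ (k + 1) α
      - α * besselJ k α * besselJ (k + 1) (κ / α) := by
    show (κ / α) * besselJ (k+1) α * deriv (besselJ (k+1)) (κ / α)
        - α * besselJ (k+1) (κ / α) * deriv (besselJ (k+1)) α = _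
    linear_combination besselJ (k+1) α * e2b - besselJ (k+1) (κ / α) * e2a
  refine ⟨h1, h2, fun h0 => ?_⟩
  rw [h1] at h0
  rw [h2]
  have hκne : κ ≠ 0 := hκ.ne'
  field_simp at h0 ⊢
  linear_combination α ^ 2 * h0
end
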